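/- For every finite simple graph G, ker(G) equals the union of all inclusion-minimal independent sets S with d(S) > 0; that is, ker(G) = ∪{S : S is independent, d(S) > 0, and no proper subset S' ⊊ S satisfies both that S' is independent and d(S') > 0}. -/

import Mathlib

open Finset

namespace CritGraph

variable {V : Type*} [Fintype V] [DecidableEq V]

/-- The neighborhood of a set of vertices `X`:
all vertices having at least one neighbor in `X`. -/
def nbhd (G : SimpleGraph V) [DecidableRel G.Adj] (X : Finset V) : Finset V :=
  univ.filter fun v => ∃ x ∈ X, G.Adj v x

/-- The difference `d(X) = |X| - |N(X)|` of a set of vertices `X`. -/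
def diff (G : SimpleGraph V) [DecidableRel G.Adj] (X : Finset V) : ℤ :=
  (X.card : ℤ) - ((nbhd G X).card : ℤ)

/-- A set of vertices is independent if no two of its vertices are adjacent. -/
def IsIndep (G : SimpleGraph V) (S : Finset V) : Prop :=
  ∀ u ∈ S, ∀ v ∈ S, ¬ G.Adj u v

instance (G : SimpleGraph V) [DecidableRel G.Adj] : DecidablePred (IsIndep G) := fun S =>
  inferInstanceAs (Decidable (∀ u ∈ S, ∀ v ∈ S, ¬ G.Adj u v))

/-- The critical difference `d_c(G) = max {d(X) : X ⊆ V}`. -/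
def dC (G : SimpleGraph V) [DecidableRel G.Adj] : ℤ :=
  (univ : Finset V).powerset.sup' (Finset.powerset_nonempty _) (diff G)

/-- The critical independence difference `id_c(G) = max {d(I) : I independent}`. -/
def idC (G : SimpleGraph V) [DecidableRel G.Adj] : ℤ :=
  ((univ : Finset V).powerset.filter (IsIndep G)).sup'
    ⟨∅, by simp [IsIndep]⟩ (diff G)

/-- `A` is a critical independent set: `A` is independent and
`d(A) = max {d(I) : I independent}`. -/
def IsCritIndep (G : SimpleGraph V) [DecidableRel G.Adj] (A : Finset V) : Prop :=
  IsIndep G A ∧ ∀ I : Finset V, IsIndep G I → diff G I ≤ diff G A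

instance (G : SimpleGraph V) [DecidableRel G.Adj] : DecidablePred (IsCritIndep G) := fun A =>
  inferInstanceAs (Decidable (IsIndep G A ∧ ∀ I : Finset V, IsIndep G I → diff G I ≤ diff G A))

/-- `ker(G)`: the intersection of all critical independent sets of `G`. -/
def kerG (G : SimpleGraph V) [DecidableRel G.Adj] : Finset V :=
  univ.filter fun v => ∀ A : Finset V, IsCritIndep G A → v ∈ A

/-- `G - v`: the induced subgraph of `G` on `V \ {v}`. -/
def deleteVert (G : SimpleGraph V) (v : V) : SimpleGraph {u : V // u ≠ v} :=
  G.comap Subtype.val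

instance (G : SimpleGraph V) (v : V) [DecidableRel G.Adj] :
    DecidableRel (deleteVert G v).Adj := fun a b =>
  inferInstanceAs (Decidable (G.Adj a.val b.val))

/-- `S` is an inclusion-minimal independent set with positive difference. -/
def MinPosIndep (G : SimpleGraph V) [DecidableRel G.Adj] (S : Finset V) : Prop :=
  IsIndep G S ∧ 0 < diff G S ∧ ∀ S' ⊂ S, ¬ (IsIndep G S' ∧ 0 < diff G S')

/-- `S` is a maximum independent set. -/
def IsMaxIndep (G : SimpleGraph V) (S : Finset V) : Prop :=
  IsIndep G S ∧ ∀ I : Finset V, IsIndep G I → I.card ≤ S.card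

instance (G : SimpleGraph V) [DecidableRel G.Adj] : DecidablePred (IsMaxIndep G) := fun S =>
  inferInstanceAs (Decidable (IsIndep G S ∧ ∀ I : Finset V, IsIndep G I → I.card ≤ S.card))

/-- `core(G)`: the intersection of all maximum independent sets of `G`. -/
def coreG (G : SimpleGraph V) [DecidableRel G.Adj] : Finset V :=
  univ.filter fun v => ∀ A : Finset V, IsMaxIndep G A → v ∈ A


set_option linter.unusedSectionVars false
set_option linter.unusedTactic false

section Lemmas

variable {V : Type*} [Fintype V] [DecidableEq V]
variable (G : SimpleGraph V) [DecidableRel G.Adj]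

lemma mem_nbhd {X : Finset V} {a : V} : a ∈ nbhd G X ↔ ∃ x ∈ X, G.Adj a x := by
  simp [nbhd]

lemma nbhd_mono {X Y : Finset V} (h : X ⊆ Y) : nbhd G X ⊆ nbhd G Y := by
  intro a ha
  rw [mem_nbhd] at ha ⊢
  obtain ⟨x, hx, hadj⟩ := ha
  exact ⟨x, h hx, hadj⟩

lemma nbhd_union (X Y : Finset V) : nbhd G (X ∪ Y) = nbhd G X ∪ nbhd G Y := by
  ext a
  simp only [mem_nbhd, Finset.mem_union]
  constructor
  · rintro ⟨x, hx | hx, hadj⟩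
    · exact Or.inl ⟨x, hx, hadj⟩
    · exact Or.inr ⟨x, hx, hadj⟩
  · rintro (⟨x, hx, hadj⟩ | ⟨x, hx, hadj⟩)
    · exact ⟨x, Or.inl hx, hadj⟩
    · exact ⟨x, Or.inr hx, hadj⟩

lemma indep_subset {X Y : Finset V} (h : X ⊆ Y) (hY : IsIndep G Y) : IsIndep G X :=
  fun u hu v hv => hY u (h hu) v (h hv)

lemma supermod (X Y : Finset V) :
    diff G X + diff G Y ≤ diff G (X ∪ Y) + diff G (X ∩ Y) := by
  have h1 : (X ∪ Y).card + (X ∩ Y).card = X.card + Y.card :=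
    Finset.card_union_add_card_inter X Y
  have h2 : (nbhd G (X ∪ Y)).card + (nbhd G (X ∩ Y)).card
      ≤ (nbhd G X).card + (nbhd G Y).card := by
    have hu : nbhd G (X ∪ Y) = nbhd G X ∪ nbhd G Y := nbhd_union G X Y
    have hi : nbhd G (X ∩ Y) ⊆ nbhd G X ∩ nbhd G Y :=
      Finset.subset_inter (nbhd_mono G Finset.inter_subset_left)
        (nbhd_mono G Finset.inter_subset_right)
    calc (nbhd G (X ∪ Y)).card + (nbhd G (X ∩ Y)).card
        ≤ (nbhd G X ∪ nbhd G Y).card + (nbhd G X ∩ nbhd G Y).card := by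
          rw [hu]; exact Nat.add_le_add_left (Finset.card_le_card hi) _
      _ = (nbhd G X).card + (nbhd G Y).card :=
          Finset.card_union_add_card_inter _ _
  simp only [diff]
  push_cast
  omega

/-- Stripping the neighborhood: an independent set with at least the same difference. -/
lemma strip (X : Finset V) :
    IsIndep G (X \ nbhd G X) ∧ diff G X ≤ diff G (X \ nbhd G X) := by
  set I := X \ nbhd G X with hI
  constructor
  · intro u hu v hv hadj
    have hvX : v ∈ X := (Finset.mem_sdiff.1 hv).1
    have : u ∈ nbhd G X := (mem_nbhd G).2 ⟨v, hvX, hadj⟩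
    exact (Finset.mem_sdiff.1 hu).2 this
  · have hIcard : I.card = X.card - (X ∩ nbhd G X).card := by
      rw [hI, ← Finset.sdiff_inter_self_left X (nbhd G X),
        Finset.card_sdiff_of_subset Finset.inter_subset_left]
    have hNsub : nbhd G I ⊆ nbhd G X \ (X ∩ nbhd G X) := by
      intro w hw
      obtain ⟨a, haI, hadj⟩ := (mem_nbhd G).1 hw
      have haX : a ∈ X := (Finset.mem_sdiff.1 haI).1
      refine Finset.mem_sdiff.2 ⟨(mem_nbhd G).2 ⟨a, haX, hadj⟩, ?_⟩
      intro hwX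
      exact (Finset.mem_sdiff.1 haI).2 ((mem_nbhd G).2 ⟨w, (Finset.mem_inter.1 hwX).1, hadj.symm⟩)
    have hNcard : (nbhd G I).card ≤ (nbhd G X).card - (X ∩ nbhd G X).card := by
      calc (nbhd G I).card ≤ (nbhd G X \ (X ∩ nbhd G X)).card := Finset.card_le_card hNsub
        _ = (nbhd G X).card - (X ∩ nbhd G X).card :=
          Finset.card_sdiff_of_subset Finset.inter_subset_right
    have h1 : (X ∩ nbhd G X).card ≤ X.card := Finset.card_le_card Finset.inter_subset_left
    have h2 : (X ∩ nbhd G X).card ≤ (nbhd G X).card :=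
      Finset.card_le_card Finset.inter_subset_right
    simp only [diff]
    push_cast
    omega


lemma exists_crit : ∃ A : Finset V, IsCritIndep G A := by
  obtain ⟨A, hA, hmax⟩ := Finset.exists_max_image
    ((Finset.univ : Finset V).powerset.filter (IsIndep G)) (diff G)
    ⟨∅, by simp [IsIndep]⟩
  refine ⟨A, (Finset.mem_filter.1 hA).2, fun I hI => hmax I ?_⟩
  exact Finset.mem_filter.2 ⟨Finset.mem_powerset.2 (Finset.subset_univ I), hI⟩

/-- every set (not only independent) has difference at most the critical difference -/
lemma diff_le_crit {A : Finset V} (hA : IsCritIndep G A) (X : Finset V) :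
    diff G X ≤ diff G A := by
  obtain ⟨hind, hle⟩ := strip G X
  exact hle.trans (hA.2 _ hind)

lemma crit_inter {A B : Finset V} (hA : IsCritIndep G A) (hB : IsCritIndep G B) :
    IsCritIndep G (A ∩ B) := by
  have hind : IsIndep G (A ∩ B) := indep_subset G Finset.inter_subset_left hA.1
  have hAB : diff G A ≤ diff G (A ∩ B) := by
    have h1 := supermod G A B
    have h2 : diff G (A ∪ B) ≤ diff G B := diff_le_crit G hB _
    have h3 : diff G A ≤ diff G B := hB.2 _ hA.1
    have h4 : diff G B ≤ diff G A := hA.2 _ hB.1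
    omega
  exact ⟨hind, fun I hI => (hA.2 I hI).trans hAB⟩

lemma ker_subset_crit {A : Finset V} (hA : IsCritIndep G A) : kerG G ⊆ A := by
  intro x hx
  exact (Finset.mem_filter.1 hx).2 A hA

lemma crit_inter_inf (s : Finset (Finset V)) (hs : ∀ B ∈ s, IsCritIndep G B) :
    ∀ A : Finset V, IsCritIndep G A → IsCritIndep G (A ∩ s.inf id) := by
  induction s using Finset.induction with
  | empty => intro A hA; simpa using hA
  | @insert B s' _ IH =>
    intro A hA
    rw [Finset.inf_insert]
    have : A ∩ (id B ⊓ s'.inf id) = (A ∩ B) ∩ s'.inf id := by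
      simp only [id, Finset.inf_eq_inter, Finset.inter_assoc]
    rw [this]
    exact IH (fun C hC => hs C (Finset.mem_insert_of_mem hC)) (A ∩ B)
      (crit_inter G hA (hs B (Finset.mem_insert_self B s')))

lemma kerG_crit : IsCritIndep G (kerG G) := by
  obtain ⟨A₀, hA₀⟩ := exists_crit G
  set F := (Finset.univ : Finset V).powerset.filter (IsCritIndep G) with hF
  have hkey : kerG G = A₀ ∩ F.inf id := by
    apply Finset.Subset.antisymm
    · apply Finset.subset_inter (ker_subset_crit G hA₀)
      have : kerG G ≤ F.inf id := Finset.le_inf (fun B hB => by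
        exact_mod_cast ker_subset_crit G (Finset.mem_filter.1 hB).2)
      exact this
    · intro x hx
      have hx2 := (Finset.mem_inter.1 hx).2
      refine Finset.mem_filter.2 ⟨Finset.mem_univ x, fun A hA => ?_⟩
      have hAF : A ∈ F := Finset.mem_filter.2
        ⟨Finset.mem_powerset.2 (Finset.subset_univ A), hA⟩
      have : F.inf id ≤ id A := Finset.inf_le hAF
      exact this hx2
  rw [hkey]
  exact crit_inter_inf G F (fun B hB => (Finset.mem_filter.1 hB).2) A₀ hA₀

lemma minpos_subset_ker {S : Finset V} (hS : MinPosIndep G S) : S ⊆ kerG G := by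
  obtain ⟨hind, hpos, hmin⟩ := hS
  intro x hx
  refine Finset.mem_filter.2 ⟨Finset.mem_univ x, fun A hA => ?_⟩
  have h1 := supermod G A S
  have h2 : diff G (A ∪ S) ≤ diff G A := diff_le_crit G hA _
  have hposAS : 0 < diff G (A ∩ S) := by omega
  have hsub : A ∩ S ⊆ S := Finset.inter_subset_right
  have heq : A ∩ S = S := by
    by_contra hne
    exact hmin (A ∩ S) (Finset.ssubset_iff_subset_ne.2 ⟨hsub, hne⟩)
      ⟨indep_subset G hsub hind, hposAS⟩
  have : S ⊆ A := heq ▸ Finset.inter_subset_left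
  exact this hx

end Lemmas

section Surplus

variable {V : Type*} [Fintype V] [DecidableEq V]
variable (G : SimpleGraph V) [DecidableRel G.Adj]

/-- Hall surplus condition: any nonempty subset of the neighborhood of `ker G`
has strictly more neighbors inside `ker G` than its own size. -/
lemma surplus {W : Finset V} (hWne : W.Nonempty) (hW : W ⊆ nbhd G (kerG G)) :
    W.card + 1 ≤ ((kerG G).filter (fun k => ∃ w ∈ W, G.Adj k w)).card := by
  set K := kerG G with hKdef
  have hK : IsCritIndep G K := kerG_crit G
  set B := K.filter (fun k => ∃ w ∈ W, G.Adj k w) with hB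
  set A := K.filter (fun k => ¬ ∃ w ∈ W, G.Adj k w) with hA
  have hcard : B.card + A.card = K.card := Finset.card_filter_add_card_filter_not _
  -- B is nonempty, producing an element of K not in A
  obtain ⟨w0, hw0⟩ := hWne
  obtain ⟨k0, hk0K, hk0adj⟩ := (mem_nbhd G).1 (hW hw0)
  have hk0B : k0 ∈ B := Finset.mem_filter.2 ⟨hk0K, ⟨w0, hw0, hk0adj.symm⟩⟩
  have hk0A : k0 ∉ A := fun h => (Finset.mem_filter.1 h).2 ⟨w0, hw0, hk0adj.symm⟩
  -- A has diff strictly below the critical difference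
  have hAK : A ⊆ K := Finset.filter_subset _ _
  have hAle : diff G A ≤ diff G K := hK.2 A (indep_subset G hAK hK.1)
  have hAne : diff G A ≠ diff G K := by
    intro heq
    have hAcrit : IsCritIndep G A :=
      ⟨indep_subset G hAK hK.1, fun I hI => (hK.2 I hI).trans_eq heq.symm⟩
    exact hk0A (ker_subset_crit G hAcrit hk0K)
  -- neighborhood of A avoids W
  have hNA : nbhd G A ⊆ nbhd G K \ W := by
    intro w hw
    obtain ⟨a, haA, hadj⟩ := (mem_nbhd G).1 hw
    refine Finset.mem_sdiff.2 ⟨(mem_nbhd G).2 ⟨a, hAK haA, hadj⟩, fun hwW => ?_⟩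
    exact (Finset.mem_filter.1 haA).2 ⟨w, hwW, hadj.symm⟩
  have hNAcard : (nbhd G A).card ≤ (nbhd G K).card - W.card := by
    calc (nbhd G A).card ≤ (nbhd G K \ W).card := Finset.card_le_card hNA
      _ = (nbhd G K).card - W.card := Finset.card_sdiff_of_subset hW
  have hWle : W.card ≤ (nbhd G K).card := Finset.card_le_card hW
  simp only [diff] at hAle hAne
  omega

end Surplus

/-- `ker(G)` equals the union of all inclusion-minimal independent sets `S`
with `d(S) > 0`. -/
theorem kerG_eq_union_minPosIndep (G : SimpleGraph V) [DecidableRel G.Adj] :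
    (kerG G : Set V) = ⋃ S ∈ {S : Finset V | MinPosIndep G S}, (S : Set V) := by
  classical
  apply Set.Subset.antisymm
  · intro x hx
    have hxker : x ∈ kerG G := by exact_mod_cast hx
    set K := kerG G with hKdef
    have hK : IsCritIndep G K := kerG_crit G
    have hxK : x ∈ K := hxker
    -- Hall's condition for the matching from N(K) into K avoiding x
    set t : {w // w ∈ nbhd G K} → Finset V :=
      fun w => (K.filter (fun k => G.Adj k w.val)).erase x with ht
    have hall : ∀ s : Finset {w // w ∈ nbhd G K}, s.card ≤ (s.biUnion t).card := by
      intro s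
      rcases s.eq_empty_or_nonempty with rfl | hsne
      · simp
      · set W := s.image Subtype.val with hW
        have hWne : W.Nonempty := hsne.image _
        have hWsub : W ⊆ nbhd G K := by
          intro w hw
          obtain ⟨w', _, rfl⟩ := Finset.mem_image.1 hw
          exact w'.2
        have hsur : W.card + 1 ≤ (K.filter (fun k => ∃ w ∈ W, G.Adj k w)).card :=
          surplus G hWne hWsub
        have hWcard : W.card = s.card :=
          Finset.card_image_of_injective s Subtype.val_injective
        have hsub : (K.filter (fun k => ∃ w ∈ W, G.Adj k w)).erase x ⊆ s.biUnion t := by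
          intro k hk
          have hkx : k ≠ x := Finset.ne_of_mem_erase hk
          have hk2 := Finset.mem_of_mem_erase hk
          obtain ⟨hkK, w, hwW, hadj⟩ := Finset.mem_filter.1 hk2
          obtain ⟨w', hw's, hval⟩ := Finset.mem_image.1 hwW
          refine Finset.mem_biUnion.2 ⟨w', hw's, ?_⟩
          refine Finset.mem_erase.2 ⟨hkx, Finset.mem_filter.2 ⟨hkK, ?_⟩⟩
          rw [hval]
          exact hadj
        have h1 : W.card ≤ ((K.filter (fun k => ∃ w ∈ W, G.Adj k w)).erase x).card := by
          have h2 := Finset.pred_card_le_card_erase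
            (s := K.filter (fun k => ∃ w ∈ W, G.Adj k w)) (a := x)
          omega
        calc s.card = W.card := hWcard.symm
          _ ≤ _ := h1
          _ ≤ (s.biUnion t).card := Finset.card_le_card hsub
    obtain ⟨f, hfinj, hft⟩ := (Finset.all_card_le_biUnion_card_iff_exists_injective t).1 hall
    have hfK : ∀ w, f w ∈ K :=
      fun w => (Finset.mem_filter.1 (Finset.mem_of_mem_erase (hft w))).1
    have hfadj : ∀ w, G.Adj (f w) w.val :=
      fun w => (Finset.mem_filter.1 (Finset.mem_of_mem_erase (hft w))).2
    have hfx : ∀ w, f w ≠ x := fun w => Finset.ne_of_mem_erase (hft w)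
    -- the closure of {x} under the matching
    set Scl : Finset V := K.filter (fun a => ∀ S : Finset V,
      (S ⊆ K ∧ x ∈ S ∧ ∀ w : {w // w ∈ nbhd G K}, w.val ∈ nbhd G S → f w ∈ S) → a ∈ S)
      with hScl
    have hSclsub : Scl ⊆ K := Finset.filter_subset _ _
    have hxScl : x ∈ Scl := Finset.mem_filter.2 ⟨hxK, fun S hS => hS.2.1⟩
    have hSclle : ∀ S : Finset V, S ⊆ K → x ∈ S →
        (∀ w : {w // w ∈ nbhd G K}, w.val ∈ nbhd G S → f w ∈ S) → Scl ⊆ S :=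
      fun S h1 h2 h3 a ha => (Finset.mem_filter.1 ha).2 S ⟨h1, h2, h3⟩
    have hclosed : ∀ w : {w // w ∈ nbhd G K}, w.val ∈ nbhd G Scl → f w ∈ Scl := by
      intro w hw
      refine Finset.mem_filter.2 ⟨hfK w, fun S hS => ?_⟩
      exact hS.2.2 w (nbhd_mono G (hSclle S hS.1 hS.2.1 hS.2.2) hw)
    have him : ∀ a ∈ Scl, a ≠ x → ∃ w, f w = a := by
      intro a ha hax
      have hsub2 : Scl ⊆ Scl.filter (fun a => a = x ∨ ∃ w, f w = a) := by
        apply hSclle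
        · exact (Finset.filter_subset _ _).trans hSclsub
        · exact Finset.mem_filter.2 ⟨hxScl, Or.inl rfl⟩
        · intro w hw
          have hw' : w.val ∈ nbhd G Scl := nbhd_mono G (Finset.filter_subset _ _) hw
          exact Finset.mem_filter.2 ⟨hclosed w hw', Or.inr ⟨w, rfl⟩⟩
      rcases (Finset.mem_filter.1 (hsub2 ha)).2 with h | h
      · exact absurd h hax
      · exact h
    -- the closure has positive difference
    have hcards : (nbhd G Scl).card ≤ (Scl.erase x).card := by
      apply Finset.card_le_card_of_injOn
        (fun w => if h : w ∈ nbhd G K then f ⟨w, h⟩ else w)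
      · intro w hw
        have hwK : w ∈ nbhd G K := nbhd_mono G hSclsub hw
        simp only [dif_pos hwK]
        exact Finset.mem_erase.2 ⟨hfx _, hclosed ⟨w, hwK⟩ hw⟩
      · intro w1 h1 w2 h2 heq
        have hw1 : w1 ∈ nbhd G Scl := by exact_mod_cast h1
        have hw2 : w2 ∈ nbhd G Scl := by exact_mod_cast h2
        have hw1K : w1 ∈ nbhd G K := nbhd_mono G hSclsub hw1
        have hw2K : w2 ∈ nbhd G K := nbhd_mono G hSclsub hw2
        simp only [dif_pos hw1K, dif_pos hw2K] at heq
        exact congrArg Subtype.val (hfinj heq)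
    have hdScl : 0 < diff G Scl := by
      have h1 : (Scl.erase x).card = Scl.card - 1 := Finset.card_erase_of_mem hxScl
      have h2 : 1 ≤ Scl.card := Finset.card_pos.2 ⟨x, hxScl⟩
      simp only [diff]
      omega
    -- take a minimum-cardinality positive subset of the closure containing x
    have hfam : Scl ∈ Scl.powerset.filter (fun T => x ∈ T ∧ 0 < diff G T) :=
      Finset.mem_filter.2 ⟨Finset.mem_powerset.2 Finset.Subset.rfl, hxScl, hdScl⟩
    obtain ⟨T0, hT0mem, hT0min⟩ :=
      Finset.exists_min_image (Scl.powerset.filter (fun T => x ∈ T ∧ 0 < diff G T))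
        Finset.card ⟨Scl, hfam⟩
    obtain ⟨hT0pow, hxT0, hdT0⟩ := Finset.mem_filter.1 hT0mem
    have hT0Scl : T0 ⊆ Scl := Finset.mem_powerset.1 hT0pow
    have hT0K : T0 ⊆ K := hT0Scl.trans hSclsub
    have hminpos : MinPosIndep G T0 := by
      refine ⟨indep_subset G hT0K hK.1, hdT0, ?_⟩
      rintro T' hT' ⟨hI', hd'⟩
      by_cases hxT' : x ∈ T'
      · have hmem : T' ∈ Scl.powerset.filter (fun T => x ∈ T ∧ 0 < diff G T) :=
          Finset.mem_filter.2
            ⟨Finset.mem_powerset.2 (hT'.subset.trans hT0Scl), hxT', hd'⟩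
        have hle := hT0min T' hmem
        have hlt := Finset.card_lt_card hT'
        omega
      · -- every positive subset of the closure contains x
        have hcard2 : T'.card ≤ (nbhd G T').card := by
          apply Finset.card_le_card_of_injOn
            (fun a => if h : ∃ w : {w // w ∈ nbhd G K}, f w = a then h.choose.val else a)
          · intro a ha
            have haScl : a ∈ Scl := hT0Scl (hT'.subset ha)
            have hax : a ≠ x := fun h => hxT' (h ▸ ha)
            have hex : ∃ w, f w = a := him a haScl hax
            simp only [dif_pos hex]
            have hadj : G.Adj a hex.choose.val := by
              have h := hfadj hex.choose
              rwa [hex.choose_spec] at h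
            exact (mem_nbhd G).2 ⟨a, ha, hadj.symm⟩
          · intro a1 h1 a2 h2 heq
            have ha1 : a1 ∈ T' := by exact_mod_cast h1
            have ha2 : a2 ∈ T' := by exact_mod_cast h2
            have hex1 : ∃ w, f w = a1 :=
              him a1 (hT0Scl (hT'.subset ha1)) (fun h => hxT' (h ▸ ha1))
            have hex2 : ∃ w, f w = a2 :=
              him a2 (hT0Scl (hT'.subset ha2)) (fun h => hxT' (h ▸ ha2))
            simp only [dif_pos hex1, dif_pos hex2] at heq
            have hch : hex1.choose = hex2.choose := Subtype.ext heq
            rw [← hex1.choose_spec, ← hex2.choose_spec, hch]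
        have : diff G T' ≤ 0 := by
          simp only [diff]
          omega
        omega
    simp only [Set.mem_iUnion, Set.mem_setOf_eq]
    exact ⟨T0, hminpos, by exact_mod_cast hxT0⟩
  · intro x hx
    simp only [Set.mem_iUnion, Set.mem_setOf_eq] at hx
    obtain ⟨S, hS, hxS⟩ := hx
    have : x ∈ S := by exact_mod_cast hxS
    exact_mod_cast minpos_subset_ker G hS this


end CritGraph
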